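/- arXiv:1307.6828 — 2 statements merged into one kernel-verified Lean document; each statement's English description precedes it below -/
import Mathlib

section
/- Let a : {1, 2, 3, 4} → ℚ be the weight datum with a(1) = 1/12, a(2) = 2/3, a(3) = 1/4, a(4) = 1/3. Then the admissible transpositions in S₄ are exactly the two transpositions (1 3) and (2 4), and the group 𝒜 of admissible permutations is the subgroup of S₄ generated by (1 3) and (2 4), which is isomorphic to ℤ/2ℤ × ℤ/2ℤ. -/
/-- A transposition `(i j)` (with `i ≠ j`) is *admissible* for a weight datum
`a : Fin n → ℚ` if for every subset `S ⊆ {1,…,n} \ {i,j}` with `|S| ≥ 2` one has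
`a i + Σ_{k∈S} a k ≤ 1 ↔ a j + Σ_{k∈S} a k ≤ 1`. -/
def IsAdmissibleTransposition {n : ℕ} (a : Fin n → ℚ) (i j : Fin n) : Prop :=
  ∀ S : Finset (Fin n), i ∉ S → j ∉ S → 2 ≤ S.card →
    (a i + ∑ k ∈ S, a k ≤ 1 ↔ a j + ∑ k ∈ S, a k ≤ 1)

/-- The group `𝒜` of admissible permutations: the subgroup of `Sₙ` generated by the
admissible transpositions. -/
def admissibleGroup {n : ℕ} (a : Fin n → ℚ) : Subgroup (Equiv.Perm (Fin n)) :=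
  Subgroup.closure
    {σ | ∃ i j : Fin n, i ≠ j ∧ IsAdmissibleTransposition a i j ∧ σ = Equiv.swap i j}

/-- Integer version of the weights (in twelfths). -/
private def kleinB : Fin 4 → ℤ := ![1, 8, 3, 4]

private lemma kleinB_cast (k : Fin 4) :
    (![1/12, 2/3, 1/4, 1/3] : Fin 4 → ℚ) k = (kleinB k : ℚ) / 12 := by
  fin_cases k <;> norm_num [kleinB]

private lemma klein_ineq_iff (i : Fin 4) (S : Finset (Fin 4)) :
    ((![1/12, 2/3, 1/4, 1/3] : Fin 4 → ℚ) i +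
      ∑ k ∈ S, (![1/12, 2/3, 1/4, 1/3] : Fin 4 → ℚ) k ≤ 1) ↔
    (kleinB i + ∑ k ∈ S, kleinB k ≤ 12) := by
  have h : (![1/12, 2/3, 1/4, 1/3] : Fin 4 → ℚ) i +
      ∑ k ∈ S, (![1/12, 2/3, 1/4, 1/3] : Fin 4 → ℚ) k
      = ((kleinB i + ∑ k ∈ S, kleinB k : ℤ) : ℚ) / 12 := by
    simp only [kleinB_cast, ← Finset.sum_div, ← add_div]
    push_cast
    ring
  rw [h, div_le_one (by norm_num)]
  exact_mod_cast Iff.rfl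

private lemma klein_adm_iff : ∀ i j : Fin 4, i ≠ j →
    (IsAdmissibleTransposition ![1/12, 2/3, 1/4, 1/3] i j ↔
      ((i = 0 ∧ j = 2) ∨ (i = 2 ∧ j = 0) ∨ (i = 1 ∧ j = 3) ∨ (i = 3 ∧ j = 1))) := by
  have hint : ∀ i j : Fin 4, i ≠ j →
      ((∀ S : Finset (Fin 4), i ∉ S → j ∉ S → 2 ≤ S.card →
        (kleinB i + ∑ k ∈ S, kleinB k ≤ 12 ↔ kleinB j + ∑ k ∈ S, kleinB k ≤ 12)) ↔
        ((i = 0 ∧ j = 2) ∨ (i = 2 ∧ j = 0) ∨ (i = 1 ∧ j = 3) ∨ (i = 3 ∧ j = 1))) := by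
    decide
  intro i j hij
  rw [← hint i j hij]
  unfold IsAdmissibleTransposition
  constructor
  · intro h S hi hj hc
    rw [← klein_ineq_iff, ← klein_ineq_iff]
    exact h S hi hj hc
  · intro h S hi hj hc
    rw [klein_ineq_iff, klein_ineq_iff]
    exact h S hi hj hc

/-- The homomorphism from the Klein four group to `S₄`. -/
private def kleinPhi : Multiplicative (ZMod 2 × ZMod 2) →* Equiv.Perm (Fin 4) where
  toFun p := (Equiv.swap 0 2) ^ ((Multiplicative.toAdd p).1.val) *
    (Equiv.swap 1 3) ^ ((Multiplicative.toAdd p).2.val)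
  map_one' := by decide
  map_mul' := by decide

private lemma kleinPhi_inj : Function.Injective kleinPhi := by decide

private lemma kleinPhi_range :
    kleinPhi.range = Subgroup.closure {Equiv.swap (0 : Fin 4) 2, Equiv.swap (1 : Fin 4) 3} := by
  apply le_antisymm
  · rintro σ ⟨p, rfl⟩
    exact mul_mem
      (pow_mem (Subgroup.subset_closure (by simp)) _)
      (pow_mem (Subgroup.subset_closure (by simp)) _)
  · rw [Subgroup.closure_le]
    rintro σ (rfl | rfl)
    · exact ⟨Multiplicative.ofAdd (1, 0), by decide⟩
    · exact ⟨Multiplicative.ofAdd (0, 1), by decide⟩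

/-- For the weight datum `(1/12, 2/3, 1/4, 1/3)` on `4` markings
(markings `1,2,3,4` being indices `0,1,2,3`), the admissible transpositions are exactly
`(1 3)` and `(2 4)`, and the group of admissible permutations is the subgroup generated by
these two transpositions, isomorphic to `ℤ/2ℤ × ℤ/2ℤ`. -/
theorem admissibleGroup_of_weights_klein
    (a : Fin 4 → ℚ) (ha : a = ![1/12, 2/3, 1/4, 1/3]) :
    (∀ i j : Fin 4, i ≠ j →
      (IsAdmissibleTransposition a i j ↔
        ((i = 0 ∧ j = 2) ∨ (i = 2 ∧ j = 0) ∨ (i = 1 ∧ j = 3) ∨ (i = 3 ∧ j = 1)))) ∧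
    admissibleGroup a =
      Subgroup.closure {Equiv.swap (0 : Fin 4) 2, Equiv.swap (1 : Fin 4) 3} ∧
    Nonempty ((↥(admissibleGroup a)) ≃* Multiplicative (ZMod 2 × ZMod 2)) := by
  subst ha
  have h1 := klein_adm_iff
  have hset : {σ : Equiv.Perm (Fin 4) | ∃ i j : Fin 4, i ≠ j ∧
      IsAdmissibleTransposition ![1/12, 2/3, 1/4, 1/3] i j ∧ σ = Equiv.swap i j} =
      {Equiv.swap (0 : Fin 4) 2, Equiv.swap (1 : Fin 4) 3} := by
    ext σ
    simp only [Set.mem_setOf_eq, Set.mem_insert_iff, Set.mem_singleton_iff]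
    constructor
    · rintro ⟨i, j, hij, hadm, rfl⟩
      rcases (h1 i j hij).mp hadm with ⟨rfl, rfl⟩ | ⟨rfl, rfl⟩ | ⟨rfl, rfl⟩ | ⟨rfl, rfl⟩
      · left; rfl
      · left; exact Equiv.swap_comm _ _
      · right; rfl
      · right; exact Equiv.swap_comm _ _
    · rintro (rfl | rfl)
      · exact ⟨0, 2, by decide, (h1 0 2 (by decide)).mpr (Or.inl ⟨rfl, rfl⟩), rfl⟩
      · exact ⟨1, 3, by decide,
          (h1 1 3 (by decide)).mpr (Or.inr (Or.inr (Or.inl ⟨rfl, rfl⟩))), rfl⟩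
  have hG : admissibleGroup ![1/12, 2/3, 1/4, 1/3] =
      Subgroup.closure {Equiv.swap (0 : Fin 4) 2, Equiv.swap (1 : Fin 4) 3} := by
    rw [admissibleGroup, hset]
  refine ⟨h1, hG, ⟨?_⟩⟩
  exact (MulEquiv.subgroupCongr (hG.trans kleinPhi_range.symm)).trans
    (MonoidHom.ofInjective kleinPhi_inj).symm
end

section
/- Let K be a field and m ≥ 2. For each i ∈ {0, …, m} let Mᵢ := ∏_{j ≠ i} xⱼ ∈ K[x₀, …, x_m], a monomial of degree m, and for a nonempty subset S ⊊ {0, …, m} let I_S ⊆ K[x₀, …, x_m] be the ideal generated by the variables {xⱼ : j ∉ S}. Then a homogeneous polynomial P ∈ K[x₀, …, x_m] of degree m satisfies P ∈ I_S^{m−|S|} for every nonempty subset S ⊊ {0, …, m} with |S| ≤ m−1 if and only if P lies in the K-linear span of M₀, …, M_m. In particular, the K-vector space of such polynomials has dimension m+1 (the monomials M₀, …, M_m being linearly independent). -/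
open MvPolynomial Finset

section CremonaAux
variable {K : Type*} [Field K] {σ : Type*} [Fintype σ] [DecidableEq σ]

set_option linter.unusedSectionVars false

/-- The ideal of polynomials all of whose monomials have weight ≥ k w.r.t. T. -/
def wId (K : Type*) [Field K] (T : Finset σ) (k : ℕ) : Ideal (MvPolynomial σ K) where
  carrier := {P | ∀ d ∈ P.support, k ≤ ∑ j ∈ T, d j}
  add_mem' := by
    intro a b ha hb d hd
    rcases Finset.mem_union.mp (MvPolynomial.support_add hd) with h | h
    · exact ha d h
    · exact hb d h
  zero_mem' := by intro d hd; simp at hd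
  smul_mem' := by
    intro c P hP d hd
    rw [smul_eq_mul] at hd
    obtain ⟨a, ha, b, hb, rfl⟩ := Finset.mem_add.mp (MvPolynomial.support_mul c P hd)
    calc k ≤ ∑ j ∈ T, b j := hP b hb
      _ ≤ ∑ j ∈ T, (a + b) j := Finset.sum_le_sum fun j _ => by simp

lemma span_pow_le_wId (T : Finset σ) (k : ℕ) :
    (Ideal.span ((fun j => (X j : MvPolynomial σ K)) '' ↑T)) ^ k ≤ wId K T k := by
  induction k with
  | zero => intro P _ d _; exact Nat.zero_le _
  | succ k ih =>
    rw [pow_succ, Ideal.mul_le]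
    intro r hr s hs d hd
    obtain ⟨a, ha, b, hb, rfl⟩ := Finset.mem_add.mp (MvPolynomial.support_mul r s hd)
    have h1 : s ∈ wId K T 1 := by
      refine Ideal.span_le.mpr ?_ hs
      rintro _ ⟨j, hj, rfl⟩ d hd
      rw [MvPolynomial.support_X, Finset.mem_singleton] at hd
      subst hd
      simpa using Finset.single_le_sum
        (f := fun j' => (Finsupp.single j 1 : σ →₀ ℕ) j') (fun i _ => Nat.zero_le _) hj
    have ha' := ih hr a ha
    have hb' := h1 b hb
    simp only [Finsupp.add_apply, Finset.sum_add_distrib]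
    omega

lemma prod_X_eq_monomial (A : Finset σ) :
    (∏ j ∈ A, (X j : MvPolynomial σ K)) = monomial (∑ j ∈ A, Finsupp.single j 1) 1 := by
  induction A using Finset.cons_induction with
  | empty => simp
  | cons a s ha ih =>
    have hX : (X a : MvPolynomial σ K) = monomial (Finsupp.single a 1) 1 := rfl
    rw [Finset.prod_cons, Finset.sum_cons, ih, hX, monomial_mul, one_mul]

lemma prod_X_mem_pow (T A : Finset σ) (hAT : A ⊆ T) :
    (∏ j ∈ A, (X j : MvPolynomial σ K)) ∈
      (Ideal.span ((fun j => (X j : MvPolynomial σ K)) '' ↑T)) ^ A.card := by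
  induction A using Finset.cons_induction with
  | empty => simp
  | cons a s ha ih =>
    rw [Finset.prod_cons, Finset.card_cons, pow_succ']
    exact Ideal.mul_mem_mul
      (Ideal.subset_span ⟨a, by simpa using hAT (Finset.mem_cons_self a s), rfl⟩)
      (ih fun j hj => hAT (Finset.mem_cons.mpr (Or.inr hj)))

/-- Exponent of the `i`-th Cremona monomial. -/
noncomputable def Dex (i : σ) : σ →₀ ℕ := ∑ j ∈ Finset.univ.erase i, Finsupp.single j 1

lemma Dex_apply (i j : σ) : Dex i j = if j = i then 0 else 1 := by
  rw [Dex, Finsupp.finset_sum_apply]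
  simp only [Finsupp.single_apply]
  rw [Finset.sum_ite_eq' (Finset.univ.erase i) j (fun _ => 1)]
  by_cases h : j = i <;> simp [h]

end CremonaAux

/-- Let `K` be a field and `m ≥ 2`. For `i ∈ {0,…,m}` let
`Mᵢ = ∏_{j ≠ i} xⱼ`, and for a nonempty proper subset `S` of the indices let `I_S` be the
ideal generated by the variables `xⱼ` with `j ∉ S`. A homogeneous polynomial `P` of degree
`m` lies in `I_S ^ (m − |S|)` for every nonempty proper `S` with `|S| ≤ m − 1` if and only
if `P` lies in the `K`-linear span of `M₀, …, M_m`; moreover the `Mᵢ` are linearly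
independent (so this space of polynomials has dimension `m + 1`). -/
theorem cremona_linear_system_span
    (K : Type*) [Field K] (m : ℕ) (hm : 2 ≤ m) :
    (∀ P : MvPolynomial (Fin (m + 1)) K, P.IsHomogeneous m →
      ((∀ S : Finset (Fin (m + 1)), S.Nonempty → S ≠ Finset.univ → S.card ≤ m - 1 →
          P ∈ (Ideal.span ((fun j => (X j : MvPolynomial (Fin (m + 1)) K)) ''
                {j | j ∉ S})) ^ (m - S.card)) ↔
        P ∈ Submodule.span K
          (Set.range (fun i : Fin (m + 1) =>
            ∏ j ∈ Finset.univ.erase i, (X j : MvPolynomial (Fin (m + 1)) K))))) ∧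
    LinearIndependent K
      (fun i : Fin (m + 1) =>
        ∏ j ∈ Finset.univ.erase i, (X j : MvPolynomial (Fin (m + 1)) K)) := by
  have hMeq : (fun i : Fin (m + 1) =>
      ∏ j ∈ Finset.univ.erase i, (X j : MvPolynomial (Fin (m + 1)) K))
      = fun i => monomial (Dex i) 1 := by
    funext i; rw [prod_X_eq_monomial]; rfl
  have hset : ∀ S : Finset (Fin (m + 1)), {j | j ∉ S} = (↑(Sᶜ) : Set (Fin (m + 1))) := by
    intro S; ext j; simp
  constructor
  · intro P hP
    constructor
    · -- forward direction
      intro h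
      -- every exponent in the support has total degree m and all entries ≤ 1
      have hdeg : ∀ d ∈ P.support, ∑ j, d j = m := by
        intro d hd
        have hc : coeff d P ≠ 0 := MvPolynomial.mem_support_iff.mp hd
        have hdm : d.degree = m := by
          by_contra hne
          exact hc (hP.coeff_eq_zero hne)
        have hds : d.degree = ∑ j, d j := by
          rw [Finsupp.degree]
          exact Finset.sum_subset (Finset.subset_univ _)
            (fun j _ hj => Finsupp.notMem_support_iff.mp hj)
        rw [← hds, hdm]
      have hle1 : ∀ d ∈ P.support, ∀ j, d j ≤ 1 := by
        intro d hd j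
        have hScard : ({j} : Finset (Fin (m + 1))).card = 1 := Finset.card_singleton j
        have hS := h {j} (Finset.singleton_nonempty j)
          (fun hEq => by
            have := congrArg Finset.card hEq
            rw [hScard, Finset.card_univ, Fintype.card_fin] at this
            omega)
          (by rw [hScard]; omega)
        rw [hset, hScard] at hS
        have hw := span_pow_le_wId ({j}ᶜ) (m - 1) hS d hd
        have hsplit : ∑ j' ∈ ({j}ᶜ : Finset (Fin (m + 1))), d j'
            + ∑ j' ∈ ({j} : Finset (Fin (m + 1))), d j' = ∑ j', d j' :=
          Finset.sum_compl_add_sum {j} d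
        rw [Finset.sum_singleton, hdeg d hd] at hsplit
        omega
      rw [← MvPolynomial.support_sum_monomial_coeff P]
      refine Submodule.sum_mem _ fun d hd => ?_
      obtain ⟨i, hiF⟩ : ∃ i, Finset.univ.filter (fun j => d j = 0) = {i} := by
        apply Finset.card_eq_one.mp
        have h0 : ∑ j ∈ Finset.univ.filter (fun j => d j = 0), d j = 0 :=
          Finset.sum_eq_zero fun j hj => (Finset.mem_filter.mp hj).2
        have h1 : ∑ j ∈ Finset.univ.filter (fun j => ¬ d j = 0), d j
            = (Finset.univ.filter (fun j => ¬ d j = 0)).card := by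
          rw [Finset.sum_congr rfl (fun j hj => ?_), Finset.sum_const, smul_eq_mul, mul_one]
          have := hle1 d hd j
          have := (Finset.mem_filter.mp hj).2
          omega
        have h2 := Finset.sum_filter_add_sum_filter_not Finset.univ (fun j => d j = 0) d
        have h3 := Finset.card_filter_add_card_filter_not
          (s := (Finset.univ : Finset (Fin (m + 1)))) (p := fun j => d j = 0)
        rw [hdeg d hd] at h2
        rw [Finset.card_univ, Fintype.card_fin] at h3
        omega
      have hdi : d i = 0 := by
        have hi : i ∈ Finset.univ.filter (fun j => d j = 0) := by
          rw [hiF]; exact Finset.mem_singleton_self i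
        exact (Finset.mem_filter.mp hi).2
      have hdj : ∀ j, j ≠ i → d j = 1 := by
        intro j hj
        have hnot : j ∉ Finset.univ.filter (fun j => d j = 0) := by
          rw [hiF]; simpa using hj
        have := hle1 d hd j
        simp only [Finset.mem_filter, Finset.mem_univ, true_and] at hnot
        omega
      have hdD : d = Dex i := by
        ext j
        rw [Dex_apply]
        by_cases hji : j = i
        · simp [hji, hdi]
        · simp [hji, hdj j hji]
      have hm' : (monomial d) (coeff d P)
          = coeff d P • ∏ j ∈ Finset.univ.erase i, (X j : MvPolynomial (Fin (m + 1)) K) := by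
        rw [prod_X_eq_monomial]
        rw [MvPolynomial.smul_monomial, smul_eq_mul, mul_one, hdD]
        rfl
      rw [hm']
      exact Submodule.smul_mem _ _ (Submodule.subset_span ⟨i, rfl⟩)
    · -- reverse direction
      intro hspan S hS1 hS2 hS3
      set I : Ideal (MvPolynomial (Fin (m + 1)) K) :=
        Ideal.span ((fun j => (X j : MvPolynomial (Fin (m + 1)) K)) '' {j | j ∉ S}) with hI
      have key : ∀ i : Fin (m + 1),
          (∏ j ∈ Finset.univ.erase i, (X j : MvPolynomial (Fin (m + 1)) K))
            ∈ I ^ (m - S.card) := by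
        intro i
        set A : Finset (Fin (m + 1)) := Sᶜ.erase i with hA
        have hsub : A ⊆ Finset.univ.erase i := by
          intro j hj
          exact Finset.mem_erase.mpr ⟨(Finset.mem_erase.mp hj).1, Finset.mem_univ j⟩
        rw [← Finset.prod_sdiff hsub]
        have hmem : (∏ j ∈ A, (X j : MvPolynomial (Fin (m + 1)) K)) ∈ I ^ A.card := by
          rw [hI, hset S]
          exact prod_X_mem_pow Sᶜ A (Finset.erase_subset i Sᶜ)
        have hcard : m - S.card ≤ A.card := by
          have h1 : Sᶜ.card - 1 ≤ A.card := Finset.pred_card_le_card_erase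
          have h2 : Sᶜ.card = m + 1 - S.card := by
            rw [Finset.card_compl, Fintype.card_fin]
          have h3 : S.card ≤ m - 1 := hS3
          omega
        exact Ideal.mul_mem_left _ _ ((Ideal.pow_le_pow_right hcard) hmem)
      have hle : Submodule.span K (Set.range (fun i : Fin (m + 1) =>
          ∏ j ∈ Finset.univ.erase i, (X j : MvPolynomial (Fin (m + 1)) K)))
          ≤ (I ^ (m - S.card)).restrictScalars K := by
        rw [Submodule.span_le]
        rintro _ ⟨i, rfl⟩
        exact key i
      exact hle hspan
  · -- linear independence
    rw [hMeq]
    have hinj : Function.Injective (Dex (σ := Fin (m + 1))) := by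
      intro i i' hii
      by_contra hne
      have h1 : Dex i i = 0 := by rw [Dex_apply]; simp
      have h2 : Dex i' i = 1 := by rw [Dex_apply]; simp [hne]
      rw [hii, h2] at h1
      exact one_ne_zero h1
    have := (MvPolynomial.basisMonomials (Fin (m + 1)) K).linearIndependent.comp _ hinj
    simp only [MvPolynomial.coe_basisMonomials] at this
    exact this
end
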